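/- Let A, B, A', B' be weighted point sets in ℝ^d as above with ‖a_i − a'_i‖ ≤ εΔ and ‖b_j − b'_j‖ ≤ εΔ for all i,j. Suppose T̃ is a rigid transformation achieving a c-approximation for min_T W²₂(A', T(B')), i.e., W²₂(A', T̃(B')) ≤ c·min_T W²₂(A', T(B')). Then W²₂(A, T̃(B)) ≤ c(1+2ε)²·min_T W²₂(A, T(B)) + 2ε(c + 1 + 2cε)(1+2ε)Δ². -/

import Mathlib

open scoped BigOperators

/-- The Wasserstein distance `W²₂` between weighted point sets, with squared Euclidean
ground cost, normalized by the smaller total weight. -/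
noncomputable def wass {d n₁ n₂ : ℕ}
    (a : Fin n₁ → EuclideanSpace ℝ (Fin d)) (b : Fin n₂ → EuclideanSpace ℝ (Fin d))
    (α : Fin n₁ → ℝ) (β : Fin n₂ → ℝ) : ℝ :=
  (min (∑ i, α i) (∑ j, β j))⁻¹ *
    sInf { c : ℝ | ∃ f : Fin n₁ → Fin n₂ → ℝ,
      (∀ i j, 0 ≤ f i j) ∧ (∀ i, ∑ j, f i j ≤ α i) ∧ (∀ j, ∑ i, f i j ≤ β j) ∧
      (∑ i, ∑ j, f i j = min (∑ i, α i) (∑ j, β j)) ∧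
      c = ∑ i, ∑ j, f i j * dist (a i) (b j) ^ 2 }

section Aux

variable {d n₁ n₂ : ℕ}
  (a a₂ : Fin n₁ → EuclideanSpace ℝ (Fin d)) (b b₂ : Fin n₂ → EuclideanSpace ℝ (Fin d))
  (α : Fin n₁ → ℝ) (β : Fin n₂ → ℝ)

lemma wassSet_nonneg : ∀ x ∈ { c : ℝ | ∃ f : Fin n₁ → Fin n₂ → ℝ,
      (∀ i j, 0 ≤ f i j) ∧ (∀ i, ∑ j, f i j ≤ α i) ∧ (∀ j, ∑ i, f i j ≤ β j) ∧
      (∑ i, ∑ j, f i j = min (∑ i, α i) (∑ j, β j)) ∧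
      c = ∑ i, ∑ j, f i j * dist (a i) (b j) ^ 2 }, 0 ≤ x := by
  rintro x ⟨f, hf0, -, -, -, rfl⟩
  exact Finset.sum_nonneg fun i _ => Finset.sum_nonneg fun j _ =>
    mul_nonneg (hf0 i j) (sq_nonneg _)

lemma wass_nonneg (hα : ∀ i, 0 ≤ α i) (hβ : ∀ j, 0 ≤ β j) : 0 ≤ wass a b α β := by
  apply mul_nonneg
  · exact inv_nonneg.2 (le_min (Finset.sum_nonneg fun i _ => hα i)
      (Finset.sum_nonneg fun j _ => hβ j))
  · exact Real.sInf_nonneg (wassSet_nonneg a b α β)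

lemma wassSet_nonempty (hα : ∀ i, 0 ≤ α i) (hβ : ∀ j, 0 ≤ β j)
    (hW : 0 < min (∑ i, α i) (∑ j, β j)) :
    Set.Nonempty { c : ℝ | ∃ f : Fin n₁ → Fin n₂ → ℝ,
      (∀ i j, 0 ≤ f i j) ∧ (∀ i, ∑ j, f i j ≤ α i) ∧ (∀ j, ∑ i, f i j ≤ β j) ∧
      (∑ i, ∑ j, f i j = min (∑ i, α i) (∑ j, β j)) ∧
      c = ∑ i, ∑ j, f i j * dist (a i) (b j) ^ 2 } := by
  set M := max (∑ i, α i) (∑ j, β j) with hM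
  have hM0 : 0 < M := lt_of_lt_of_le hW (min_le_max)
  refine ⟨_, fun i j => α i * β j / M,
    fun i j => div_nonneg (mul_nonneg (hα i) (hβ j)) hM0.le, ?_, ?_, ?_, rfl⟩
  · intro i
    have : ∑ j, α i * β j / M = α i / M * ∑ j, β j := by
      rw [Finset.mul_sum]; congr 1; ext j; ring
    rw [this]
    calc α i / M * ∑ j, β j ≤ α i / M * M :=
          mul_le_mul_of_nonneg_left (le_max_right _ _) (div_nonneg (hα i) hM0.le)
      _ = α i := div_mul_cancel₀ _ hM0.ne'
  · intro j
    have : ∑ i, α i * β j / M = β j / M * ∑ i, α i := by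
      rw [Finset.mul_sum]; congr 1; ext i; ring
    rw [this]
    calc β j / M * ∑ i, α i ≤ β j / M * M :=
          mul_le_mul_of_nonneg_left (le_max_left _ _) (div_nonneg (hβ j) hM0.le)
      _ = β j := div_mul_cancel₀ _ hM0.ne'
  · have : ∑ i, ∑ j, α i * β j / M = (∑ i, α i) * (∑ j, β j) / M := by
      simp only [← Finset.sum_div, ← Finset.mul_sum, ← Finset.sum_mul]
    rw [this, ← min_mul_max (∑ i, α i) (∑ j, β j), ← hM, mul_div_assoc,
      div_self hM0.ne', mul_one]

lemma wass_transfer (hα : ∀ i, 0 ≤ α i) (hβ : ∀ j, 0 ≤ β j)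
    (ε Δ : ℝ) (hε : 0 < ε) (hΔ : 0 < Δ)
    (h : ∀ i j, dist (a i) (b j) ≤ dist (a₂ i) (b₂ j) + 2 * ε * Δ) :
    wass a b α β ≤ (1 + 2 * ε) * wass a₂ b₂ α β + (2 * ε + 4 * ε ^ 2) * Δ ^ 2 := by
  set W := min (∑ i, α i) (∑ j, β j) with hWdef
  have hW0 : 0 ≤ W := le_min (Finset.sum_nonneg fun i _ => hα i)
      (Finset.sum_nonneg fun j _ => hβ j)
  rcases hW0.eq_or_lt with hW | hW
  · have h1 : wass a b α β = 0 := by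
      rw [wass, ← hWdef, ← hW, inv_zero, zero_mul]
    rw [h1]
    have h2 := wass_nonneg a₂ b₂ α β hα hβ
    nlinarith
  -- main case
  set S := { c : ℝ | ∃ f : Fin n₁ → Fin n₂ → ℝ,
      (∀ i j, 0 ≤ f i j) ∧ (∀ i, ∑ j, f i j ≤ α i) ∧ (∀ j, ∑ i, f i j ≤ β j) ∧
      (∑ i, ∑ j, f i j = min (∑ i, α i) (∑ j, β j)) ∧
      c = ∑ i, ∑ j, f i j * dist (a i) (b j) ^ 2 } with hS
  set S₂ := { c : ℝ | ∃ f : Fin n₁ → Fin n₂ → ℝ,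
      (∀ i j, 0 ≤ f i j) ∧ (∀ i, ∑ j, f i j ≤ α i) ∧ (∀ j, ∑ i, f i j ≤ β j) ∧
      (∑ i, ∑ j, f i j = min (∑ i, α i) (∑ j, β j)) ∧
      c = ∑ i, ∑ j, f i j * dist (a₂ i) (b₂ j) ^ 2 } with hS₂
  have hbdd : BddBelow S := ⟨0, fun x hx => wassSet_nonneg a b α β x hx⟩
  have hne₂ : S₂.Nonempty := wassSet_nonempty a₂ b₂ α β hα hβ hW
  set K := (2 * ε + 4 * ε ^ 2) * Δ ^ 2 with hK
  have hK0 : 0 ≤ K := by positivity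
  have key : ∀ c₂ ∈ S₂, sInf S ≤ (1 + 2 * ε) * c₂ + K * W := by
    rintro c₂ ⟨f, hf0, hrow, hcol, htot, rfl⟩
    have hmem : (∑ i, ∑ j, f i j * dist (a i) (b j) ^ 2) ∈ S :=
      ⟨f, hf0, hrow, hcol, htot, rfl⟩
    refine le_trans (csInf_le hbdd hmem) ?_
    calc ∑ i, ∑ j, f i j * dist (a i) (b j) ^ 2
        ≤ ∑ i, ∑ j, ((1 + 2 * ε) * (f i j * dist (a₂ i) (b₂ j) ^ 2) + K * f i j) := by
          refine Finset.sum_le_sum fun i _ => Finset.sum_le_sum fun j _ => ?_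
          have h1 := h i j
          have h2 : (0:ℝ) ≤ dist (a i) (b j) := dist_nonneg
          have h3 : (0:ℝ) ≤ dist (a₂ i) (b₂ j) := dist_nonneg
          have h4 := hf0 i j
          have h5 : dist (a i) (b j) ^ 2 ≤
              (1 + 2 * ε) * dist (a₂ i) (b₂ j) ^ 2 + K := by
            rw [hK]
            nlinarith [sq_nonneg (dist (a₂ i) (b₂ j) - Δ), sq_nonneg (dist (a₂ i) (b₂ j) + Δ)]
          nlinarith
      _ = (1 + 2 * ε) * (∑ i, ∑ j, f i j * dist (a₂ i) (b₂ j) ^ 2) + K * W := by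
          rw [← hWdef] at htot
          simp only [Finset.sum_add_distrib, ← Finset.mul_sum, htot]
  have key2 : sInf S ≤ (1 + 2 * ε) * sInf S₂ + K * W := by
    have hpos : (0:ℝ) < 1 + 2 * ε := by linarith
    have : (sInf S - K * W) / (1 + 2 * ε) ≤ sInf S₂ := by
      refine le_csInf hne₂ fun c₂ hc₂ => ?_
      rw [div_le_iff₀ hpos]
      have := key c₂ hc₂
      linarith [mul_comm c₂ (1 + 2 * ε)] -- fix
    rw [div_le_iff₀ hpos] at this
    linarith [mul_comm (sInf S₂) (1 + 2 * ε)]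
  have hWinv : 0 ≤ W⁻¹ := inv_nonneg.2 hW0
  have := mul_le_mul_of_nonneg_left key2 hWinv
  calc wass a b α β = W⁻¹ * sInf S := by rw [wass, ← hWdef]
    _ ≤ W⁻¹ * ((1 + 2 * ε) * sInf S₂ + K * W) := this
    _ = (1 + 2 * ε) * (W⁻¹ * sInf S₂) + K * (W⁻¹ * W) := by ring
    _ = (1 + 2 * ε) * wass a₂ b₂ α β + K := by
        rw [inv_mul_cancel₀ hW.ne', mul_one, wass, ← hWdef]

end Aux

/-- A `c`-approximate alignment of the compressed patterns `(A', B')`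
is a `c(1+2ε)²`-approximate alignment (with additive error `2ε(c+1+2cε)(1+2ε)Δ²`)
of the original patterns `(A, B)`. Rigid transformations are isometries of `ℝ^d`,
and `≤ c·min_T` is expressed by quantifying over all rigid transformations `T`. -/
theorem wass_alignment_compression
    {d n₁ n₂ : ℕ}
    (a a' : Fin n₁ → EuclideanSpace ℝ (Fin d)) (b b' : Fin n₂ → EuclideanSpace ℝ (Fin d))
    (α : Fin n₁ → ℝ) (β : Fin n₂ → ℝ) (hα : ∀ i, 0 ≤ α i) (hβ : ∀ j, 0 ≤ β j)
    (ε Δ : ℝ) (hε : 0 < ε) (hΔ : 0 < Δ)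
    (ha : ∀ i, dist (a i) (a' i) ≤ ε * Δ) (hb : ∀ j, dist (b j) (b' j) ≤ ε * Δ)
    (c : ℝ) (hc : 1 ≤ c)
    (Tt : EuclideanSpace ℝ (Fin d) → EuclideanSpace ℝ (Fin d)) (hTt : Isometry Tt)
    (happrox : ∀ T : EuclideanSpace ℝ (Fin d) → EuclideanSpace ℝ (Fin d), Isometry T →
      wass a' (fun j => Tt (b' j)) α β ≤ c * wass a' (fun j => T (b' j)) α β) :
    ∀ T : EuclideanSpace ℝ (Fin d) → EuclideanSpace ℝ (Fin d), Isometry T →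
      wass a (fun j => Tt (b j)) α β ≤
        c * (1 + 2 * ε) ^ 2 * wass a (fun j => T (b j)) α β
          + 2 * ε * (c + 1 + 2 * c * ε) * (1 + 2 * ε) * Δ ^ 2 := by
  intro T hT
  have step1 : wass a (fun j => Tt (b j)) α β ≤
      (1 + 2 * ε) * wass a' (fun j => Tt (b' j)) α β + (2 * ε + 4 * ε ^ 2) * Δ ^ 2 := by
    refine wass_transfer a a' _ (fun j => Tt (b' j)) α β hα hβ ε Δ hε hΔ fun i j => ?_
    calc dist (a i) (Tt (b j)) ≤ dist (a i) (a' i) + dist (a' i) (Tt (b' j))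
          + dist (Tt (b' j)) (Tt (b j)) := dist_triangle4 _ _ _ _
      _ ≤ ε * Δ + dist (a' i) (Tt (b' j)) + ε * Δ := by
          have h2 : dist (Tt (b' j)) (Tt (b j)) ≤ ε * Δ := by
            rw [hTt.dist_eq, dist_comm]; exact hb j
          exact add_le_add (add_le_add (ha i) le_rfl) h2
      _ = dist (a' i) (Tt (b' j)) + 2 * ε * Δ := by ring
  have step2 := happrox T hT
  have step3 : wass a' (fun j => T (b' j)) α β ≤
      (1 + 2 * ε) * wass a (fun j => T (b j)) α β + (2 * ε + 4 * ε ^ 2) * Δ ^ 2 := by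
    refine wass_transfer a' a _ (fun j => T (b j)) α β hα hβ ε Δ hε hΔ fun i j => ?_
    calc dist (a' i) (T (b' j)) ≤ dist (a' i) (a i) + dist (a i) (T (b j))
          + dist (T (b j)) (T (b' j)) := dist_triangle4 _ _ _ _
      _ ≤ ε * Δ + dist (a i) (T (b j)) + ε * Δ := by
          have h1 : dist (a' i) (a i) ≤ ε * Δ := by rw [dist_comm]; exact ha i
          have h2 : dist (T (b j)) (T (b' j)) ≤ ε * Δ := by rw [hT.dist_eq]; exact hb j
          exact add_le_add (add_le_add h1 le_rfl) h2
      _ = dist (a i) (T (b j)) + 2 * ε * Δ := by ring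
  have h4 : 0 ≤ wass a (fun j => T (b j)) α β := wass_nonneg _ _ _ _ hα hβ
  have m1 : (1 + 2 * ε) * wass a' (fun j => Tt (b' j)) α β ≤
      (1 + 2 * ε) * (c * wass a' (fun j => T (b' j)) α β) :=
    mul_le_mul_of_nonneg_left step2 (by linarith)
  have m2 : (c * (1 + 2 * ε)) * wass a' (fun j => T (b' j)) α β ≤
      (c * (1 + 2 * ε)) * ((1 + 2 * ε) * wass a (fun j => T (b j)) α β
        + (2 * ε + 4 * ε ^ 2) * Δ ^ 2) :=
    mul_le_mul_of_nonneg_left step3 (by nlinarith)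
  nlinarith [step1, m1, m2]
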